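/- Let P be a Coxeter polytope of S^d with facet set S, facet linear forms (α_s) and polar vectors (v_s), whose Cartan matrix A_P = (α_s(v_t)) is of negative type (each irreducible component has negative Perron eigenvalue of minimal modulus). Then there exists an affine chart of S^d containing P and all the polars [v_s], s∈S. -/

import Mathlib

open Set Submodule
noncomputable section

namespace Vinberg

variable {V : Type*} [NormedAddCommGroup V] [NormedSpace ℝ V]

/-- A Coxeter polytope on the projective sphere `S(V)`, described by the cone
`{x | ∀ s, α s x ≤ 0}`: the data of the facet linear forms `α s` and the polar
vectors `v s` of the reflections `σ_s = Id − α_s ⊗ v_s`, subject to the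
Vinberg conditions. -/
structure CoxPoly (V : Type*) [NormedAddCommGroup V] [NormedSpace ℝ V]
    (S : Type*) [Fintype S] where
  α : S → (V →ₗ[ℝ] ℝ)
  v : S → V
  pair : ∀ s, α s (v s) = 2
  offdiag : ∀ s t, s ≠ t → α s (v t) ≤ 0
  zsym : ∀ s t, α s (v t) = 0 → α t (v s) = 0
  angle : ∀ s t, s ≠ t →
    (∃ m : ℕ, 2 ≤ m ∧ α s (v t) * α t (v s) = 4 * Real.cos (Real.pi / m) ^ 2) ∨
      4 ≤ α s (v t) * α t (v s)
  sharp : ∀ x : V, (∀ s, α s x ≤ 0) → (∀ s, α s (-x) ≤ 0) → x = 0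
  int_nonempty : (interior {x : V | ∀ s, α s x ≤ 0}).Nonempty

variable {S : Type*} [Fintype S]

/-- The convex cone over the polytope `P`. -/
def CoxPoly.cone (P : CoxPoly V S) : Set V := {x | ∀ s, P.α s x ≤ 0}

/-- The reflection across the facet `s`. -/
def CoxPoly.refl (P : CoxPoly V S) (s : S) : Module.End ℝ V :=
  LinearMap.id - (P.α s).smulRight (P.v s)

lemma CoxPoly.refl_mul_self (P : CoxPoly V S) (s : S) : P.refl s * P.refl s = 1 := by
  ext x
  have h := P.pair s
  simp only [CoxPoly.refl, Module.End.mul_apply, LinearMap.sub_apply, LinearMap.id_apply,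
    LinearMap.smulRight_apply, map_sub, map_smul, Module.End.one_apply, smul_eq_mul, h]
  module

/-- The reflection across the facet `s`, as an invertible endomorphism. -/
def CoxPoly.reflU (P : CoxPoly V S) (s : S) : (Module.End ℝ V)ˣ :=
  ⟨P.refl s, P.refl s, P.refl_mul_self s, P.refl_mul_self s⟩

/-- The linear Coxeter group `Γ_P` generated by the facet reflections. -/
def CoxPoly.group (P : CoxPoly V S) : Subgroup (Module.End ℝ V)ˣ :=
  Subgroup.closure (Set.range P.reflU)

/-- The cone over the Tits–Vinberg convex set `C_P = ⋃_{γ ∈ Γ_P} γ(P)`. -/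
def CoxPoly.orbit (P : CoxPoly V S) : Set V :=
  ⋃ γ ∈ P.group, ((γ : (Module.End ℝ V)ˣ) : Module.End ℝ V) '' P.cone

/-- The cone over the convex open set `Ω_P`, the interior of `C_P`. -/
def CoxPoly.domain (P : CoxPoly V S) : Set V := interior P.orbit

/-- The Cartan matrix `A_P = (α_s(v_t))`. -/
def CoxPoly.cartan (P : CoxPoly V S) : S → S → ℝ := fun s t => P.α s (P.v t)

/-- The irreducible component of the index `s` for a matrix `A`. -/
def comp {T : Type*} (A : T → T → ℝ) (s : T) : Set T :=
  {t | Relation.ReflTransGen (fun a b => A a b ≠ 0) s t}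

/-- The complex spectrum of a finite real matrix. -/
def specOf {T : Type*} [Finite T] (A : T → T → ℝ) : Set ℂ :=
  letI : Fintype T := Fintype.ofFinite T
  letI : DecidableEq T := Classical.decEq T
  spectrum ℂ (Matrix.of fun a b : T => (A a b : ℂ))

/-- The rank of a finite real matrix. -/
def rankOf {T : Type*} [Finite T] (A : T → T → ℝ) : ℕ :=
  letI : Fintype T := Fintype.ofFinite T
  letI : DecidableEq T := Classical.decEq T
  (Matrix.of fun a b : T => A a b).rank

/-- The restriction of a matrix to a set of indices. -/
def restrict {T : Type*} (A : T → T → ℝ) (U : Set T) : ↥U → ↥U → ℝ :=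
  fun a b => A a b

/-- The spectrum of the irreducible component of `s`. -/
def compSpec {T : Type*} [Finite T] (A : T → T → ℝ) (s : T) : Set ℂ :=
  specOf (restrict A (comp A s))

/-- The component of `s` is of positive type: its (Perron–Frobenius) eigenvalue of
minimal modulus is positive. -/
def PosTypeAt {T : Type*} [Finite T] (A : T → T → ℝ) (s : T) : Prop :=
  ∃ lam : ℝ, 0 < lam ∧ (lam : ℂ) ∈ compSpec A s ∧
    ∀ μ ∈ compSpec A s, |lam| ≤ ‖μ‖

/-- The component of `s` is of zero type: its eigenvalue of minimal modulus is `0`. -/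
def ZeroTypeAt {T : Type*} [Finite T] (A : T → T → ℝ) (s : T) : Prop :=
  (0 : ℂ) ∈ compSpec A s

/-- The component of `s` is of negative type: its (Perron–Frobenius) eigenvalue of
minimal modulus is negative. -/
def NegTypeAt {T : Type*} [Finite T] (A : T → T → ℝ) (s : T) : Prop :=
  ∃ lam : ℝ, lam < 0 ∧ (lam : ℂ) ∈ compSpec A s ∧
    ∀ μ ∈ compSpec A s, |lam| ≤ ‖μ‖

/-- All irreducible components of `A` are of positive type. -/
def PositiveType {T : Type*} [Finite T] (A : T → T → ℝ) : Prop := ∀ s, PosTypeAt A s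

/-- All irreducible components of `A` are of zero type. -/
def ZeroType {T : Type*} [Finite T] (A : T → T → ℝ) : Prop := ∀ s, ZeroTypeAt A s

/-- All irreducible components of `A` are of negative type. -/
def NegativeType {T : Type*} [Finite T] (A : T → T → ℝ) : Prop := ∀ s, NegTypeAt A s

/-- `P` is loxodromic: its Cartan matrix is of negative type and of full rank `d+1`. -/
def CoxPoly.Loxodromic (P : CoxPoly V S) : Prop :=
  NegativeType P.cartan ∧ rankOf P.cartan = Module.finrank ℝ V

/-- `P` is elliptic: its Cartan matrix is of positive type. -/
def CoxPoly.Elliptic (P : CoxPoly V S) : Prop := PositiveType P.cartan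

/-- `P` is parabolic: its Cartan matrix is of zero type and of rank `d`. -/
def CoxPoly.Parabolic (P : CoxPoly V S) : Prop :=
  ZeroType P.cartan ∧ rankOf P.cartan = Module.finrank ℝ V - 1

/-- The set of facets containing the point `p`. -/
def CoxPoly.facetsAt (P : CoxPoly V S) (p : V) : Set S := {s | P.α s p = 0}

/-- `p` spans a vertex of `P`: it is a nonzero point of the cone of `P` and the
supports of the facets through `p` intersect exactly in the line through `p`. -/
def CoxPoly.IsVertex (P : CoxPoly V S) (p : V) : Prop :=
  p ∈ P.cone ∧ p ≠ 0 ∧ ∀ y : V, (∀ s ∈ P.facetsAt p, P.α s y = 0) → ∃ c : ℝ, y = c • p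

/-- The Cartan matrix of the link of `P` at `p`: the principal submatrix of the
Cartan matrix on the facets through `p`. -/
def CoxPoly.linkCartan (P : CoxPoly V S) (p : V) : ↥(P.facetsAt p) → ↥(P.facetsAt p) → ℝ :=
  restrict P.cartan (P.facetsAt p)

/-- The vertex `p` is elliptic: the link `P_p` is elliptic. -/
def CoxPoly.VertexElliptic (P : CoxPoly V S) (p : V) : Prop := PositiveType (P.linkCartan p)

/-- The vertex `p` is parabolic: the link `P_p` (a Coxeter polytope of `S^{d-1}`)
is parabolic. -/
def CoxPoly.VertexParabolic (P : CoxPoly V S) (p : V) : Prop :=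
  ZeroType (P.linkCartan p) ∧ rankOf (P.linkCartan p) = Module.finrank ℝ V - 2

/-- The vertex `p` is loxodromic: the link `P_p` is loxodromic. -/
def CoxPoly.VertexLoxodromic (P : CoxPoly V S) (p : V) : Prop :=
  NegativeType (P.linkCartan p) ∧ rankOf (P.linkCartan p) = Module.finrank ℝ V - 1

/-- `P` is `2`-perfect: `P ∩ ∂Ω_P` is contained in the set of vertices of `P`. -/
def CoxPoly.TwoPerfect (P : CoxPoly V S) : Prop :=
  ∀ x ∈ P.cone, x ∈ frontier P.domain → x ≠ 0 → P.IsVertex x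

/-- The Coxeter group of `P` is irreducible: the Cartan matrix is irreducible. -/
def CoxPoly.CartanConnected (P : CoxPoly V S) : Prop :=
  ∀ s t : S, t ∈ comp P.cartan s

/-- `C` is (the cone over) a properly convex open subset of the projective sphere. -/
def IsPCCone (C : Set V) : Prop :=
  IsOpen C ∧ Convex ℝ C ∧ C.Nonempty ∧ (0 : V) ∉ C ∧
    (∀ c : ℝ, 0 < c → ∀ x ∈ C, c • x ∈ C) ∧
    ∀ x : V, x ∈ closure C → -x ∈ closure C → x = 0

/-- The set `C` is invariant under `Γ_P`. -/
def CoxPoly.Invariant (P : CoxPoly V S) (C : Set V) : Prop :=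
  ∀ γ ∈ P.group, ((γ : (Module.End ℝ V)ˣ) : Module.End ℝ V) '' C = C

/-- `L` is (the cone over) the limit set of `Γ_P`: the smallest nonempty closed
`Γ_P`-invariant subset of the projective space. -/
def CoxPoly.IsLimitSet (P : CoxPoly V S) (L : Set V) : Prop :=
  IsClosed L ∧ (0 : V) ∈ L ∧ L ≠ {0} ∧
    (∀ c : ℝ, c ≠ 0 → ∀ x ∈ L, c • x ∈ L) ∧
    (∀ γ ∈ P.group, ((γ : (Module.End ℝ V)ˣ) : Module.End ℝ V) '' L ⊆ L) ∧
    ∀ L' : Set V, IsClosed L' → (0 : V) ∈ L' → L' ≠ {0} →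
      (∀ c : ℝ, c ≠ 0 → ∀ x ∈ L', c • x ∈ L') →
      (∀ γ ∈ P.group, ((γ : (Module.End ℝ V)ˣ) : Module.End ℝ V) '' L' ⊆ L') → L ⊆ L'

/-- The action of `Γ_P` on `Ω_P` is cocompact ( `P` is perfect). -/
def CoxPoly.Cocompact (P : CoxPoly V S) : Prop :=
  ∃ K : Set V, IsCompact K ∧ (0 : V) ∉ K ∧ K ⊆ P.domain ∧
    ∀ x ∈ P.domain, ∃ γ ∈ P.group, ∃ c : ℝ, 0 < c ∧
      c • (((γ : (Module.End ℝ V)ˣ) : Module.End ℝ V) x) ∈ K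

/-- The Coxeter group of `P` is large: some finite-index subgroup surjects onto a
nonabelian free group. -/
def CoxPoly.Large (P : CoxPoly V S) : Prop :=
  ∃ H : Subgroup (Module.End ℝ V)ˣ, H ≤ P.group ∧ (H.subgroupOf P.group).index ≠ 0 ∧
    ∃ φ : ↥H →* FreeGroup (Fin 2), Function.Surjective φ

/-- `Γ_P` is strongly irreducible: every finite-index subgroup acts irreducibly. -/
def CoxPoly.StronglyIrreducible (P : CoxPoly V S) : Prop :=
  ∀ H : Subgroup (Module.End ℝ V)ˣ, H ≤ P.group → (H.subgroupOf P.group).index ≠ 0 →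
    ∀ W : Submodule ℝ V, (∀ γ ∈ H, ∀ x ∈ W, ((γ : (Module.End ℝ V)ˣ) : Module.End ℝ V) x ∈ W) →
      W = ⊥ ∨ W = ⊤



section Aux

open Matrix

/-- From membership in the spectrum of a complex matrix, extract a left eigenvector. -/
private lemma exists_left_eigvec {n : Type*} [Fintype n] [DecidableEq n]
    (M : Matrix n n ℂ) (lam : ℂ) (h : lam ∈ spectrum ℂ M) :
    ∃ z : n → ℂ, z ≠ 0 ∧ ∀ t, ∑ s, M s t * z s = lam * z t := by
  rw [spectrum.mem_iff] at h
  have hdet : (algebraMap ℂ (Matrix n n ℂ) lam - M).det = 0 := by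
    by_contra hd
    exact h ((Matrix.isUnit_iff_isUnit_det _).2 (isUnit_iff_ne_zero.2 hd))
  have hdetT : ((algebraMap ℂ (Matrix n n ℂ) lam - M).transpose).det = 0 := by
    rwa [Matrix.det_transpose]
  obtain ⟨z, hz0, hz⟩ := (Matrix.exists_mulVec_eq_zero_iff).2 hdetT
  rw [Matrix.mulVec_transpose] at hz
  have h2 : z ᵥ* M = lam • z := by
    rw [Matrix.vecMul_sub] at hz
    have h1 : z ᵥ* algebraMap ℂ (Matrix n n ℂ) lam = lam • z := by
      ext t
      simp [Algebra.algebraMap_eq_smul_one, Matrix.vecMul, dotProduct,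
        Matrix.one_apply, mul_comm, mul_ite]
    have := sub_eq_zero.mp hz
    rw [h1] at this
    exact this.symm
  refine ⟨z, hz0, fun t => ?_⟩
  have := congrFun h2 t
  simpa [Matrix.vecMul, dotProduct, mul_comm] using this

/-- Key per-component lemma: if the component of `t₀` has a negative real
eigenvalue, then there is a nonnegative vector supported and positive on the
component, whose pairing with every column in the component is negative. -/
private lemma comp_key {S : Type*} [Fintype S] (A : S → S → ℝ)
    (hdiag : ∀ s, A s s = 2) (hoff : ∀ s t, s ≠ t → A s t ≤ 0)
    (hzsym : ∀ s t, A s t = 0 → A t s = 0) (t₀ : S) (h : NegTypeAt A t₀) :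
    ∃ w : S → ℝ, (∀ s, 0 ≤ w s) ∧
      (∀ s ∈ comp A t₀, 0 < w s) ∧ (∀ t ∈ comp A t₀, ∑ s, w s * A s t < 0) ∧
      (∀ t, t ∉ comp A t₀ → ∑ s, w s * A s t = 0) := by
  classical
  obtain ⟨lam, hlam, hmem, -⟩ := h
  set C := comp A t₀ with hCdef
  letI : Fintype ↥C := Fintype.ofFinite _
  letI : DecidableEq ↥C := Classical.decEq _
  -- the step relation and closure of the component
  have hstep_symm : Symmetric (fun a b : S => A a b ≠ 0) := by
    intro a b hab hba
    exact hab (hzsym b a hba)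
  have hclosed : ∀ s ∈ C, ∀ t : S, A s t ≠ 0 → t ∈ C := by
    intro s hs t hst
    exact Relation.ReflTransGen.tail hs hst
  have hAzero : ∀ s ∈ C, ∀ t ∉ C, A s t = 0 := by
    intro s hs t ht
    by_contra hst
    exact ht (hclosed s hs t hst)
  -- extract a complex left eigenvector of the component
  have hmem' : (lam : ℂ) ∈
      spectrum ℂ (Matrix.of fun a b : ↥C => ((A a b : ℝ) : ℂ)) := hmem
  obtain ⟨z, hz0, hz⟩ := exists_left_eigvec _ _ hmem'
  -- its componentwise absolute value
  set y : ↥C → ℝ := fun s => ‖z s‖ with hydef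
  have hy0 : ∀ s, 0 ≤ y s := fun s => norm_nonneg _
  obtain ⟨s₀, hs₀⟩ : ∃ s, z s ≠ 0 := Function.ne_iff.mp hz0
  have hys₀ : 0 < y s₀ := by
    simpa [hydef] using (norm_pos_iff.mpr hs₀)
  -- the nonnegative matrix B and the bound r
  set B : ↥C → ↥C → ℝ := fun t s => if s = t then 0 else -A s t with hBdef
  have hB0 : ∀ t s, 0 ≤ B t s := by
    intro t s
    by_cases hst : s = t
    · simp [hBdef, hst]
    · have : (s : S) ≠ (t : S) := fun hc => hst (Subtype.ext hc)
      simp only [hBdef, if_neg hst]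
      linarith [hoff s t this]
  set r : ℝ := 2 - lam with hrdef
  have hr2 : 2 < r := by simp [hrdef]; linarith
  -- the key inequality for y : r • y ≤ B y componentwise
  have hkey : ∀ t, r * y t ≤ ∑ s, B t s * y s := by
    intro t
    have e0 : ∑ s : ↥C, ((A s t : ℝ) : ℂ) * z s = ((lam : ℝ) : ℂ) * z t := by
      simpa [Matrix.of_apply] using hz t
    have e1 : ∑ s ∈ Finset.univ.erase t, (-(A s t : ℝ) : ℂ) * z s = ((r : ℝ) : ℂ) * z t := by
      have esplit : ∑ s : ↥C, ((A s t : ℝ) : ℂ) * z s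
          = ((A t t : ℝ) : ℂ) * z t + ∑ s ∈ Finset.univ.erase t, ((A s t : ℝ) : ℂ) * z s :=
        (Finset.add_sum_erase Finset.univ
          (fun s : ↥C => ((A s t : ℝ) : ℂ) * z s) (Finset.mem_univ t)).symm
      rw [esplit] at e0
      have hdt : ((A t t : ℝ) : ℂ) = 2 := by
        rw [hdiag]; norm_num
      rw [hdt] at e0
      have hneg : ∑ s ∈ Finset.univ.erase t, (-(A s t : ℝ) : ℂ) * z s
          = -∑ s ∈ Finset.univ.erase t, ((A s t : ℝ) : ℂ) * z s := by
        rw [← Finset.sum_neg_distrib]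
        apply Finset.sum_congr rfl
        intro s _
        ring
      rw [hneg]
      have hrc : ((r : ℝ) : ℂ) = 2 - ((lam : ℝ) : ℂ) := by
        rw [hrdef]; push_cast; ring
      rw [hrc]
      linear_combination -e0
    have e2 : r * y t = ‖((r : ℝ) : ℂ) * z t‖ := by
      rw [norm_mul, Complex.norm_real, Real.norm_eq_abs, abs_of_nonneg (by linarith : (0:ℝ) ≤ r)]
    rw [e2, ← e1]
    calc ‖∑ s ∈ Finset.univ.erase t, (-(A s t : ℝ) : ℂ) * z s‖
        ≤ ∑ s ∈ Finset.univ.erase t, ‖(-(A s t : ℝ) : ℂ) * z s‖ :=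
          norm_sum_le _ _
      _ = ∑ s ∈ Finset.univ.erase t, B t s * y s := by
          apply Finset.sum_congr rfl
          intro s hs
          have hst : s ≠ t := Finset.ne_of_mem_erase hs
          have hcoe : (s : S) ≠ (t : S) := fun hc => hst (Subtype.ext hc)
          rw [norm_mul]
          have : ‖((-(A s t : ℝ) : ℂ))‖ = -A s t := by
            rw [show ((-(A s t : ℝ) : ℂ)) = ((-A s t : ℝ) : ℂ) by push_cast; ring,
              Complex.norm_real, Real.norm_eq_abs, abs_of_nonneg (by linarith [hoff s t hcoe])]
          rw [this, hBdef]
          simp [if_neg hst, hydef]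
      _ ≤ ∑ s, B t s * y s := by
          apply Finset.sum_le_sum_of_subset_of_nonneg (Finset.erase_subset _ _)
          intro s _ _
          exact mul_nonneg (hB0 t s) (hy0 s)
  -- the iteration operator
  set Tf : (↥C → ℝ) → (↥C → ℝ) := fun x t => x t + ∑ s, B t s * x s with hTdef
  have hT_nonneg : ∀ x : ↥C → ℝ, (∀ s, 0 ≤ x s) → ∀ t, 0 ≤ Tf x t := by
    intro x hx t
    have : 0 ≤ ∑ s, B t s * x s :=
      Finset.sum_nonneg fun s _ => mul_nonneg (hB0 t s) (hx s)
    simp only [hTdef]; linarith [hx t]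
  have hT_ge : ∀ x : ↥C → ℝ, (∀ s, 0 ≤ x s) → ∀ t, x t ≤ Tf x t := by
    intro x hx t
    have : 0 ≤ ∑ s, B t s * x s :=
      Finset.sum_nonneg fun s _ => mul_nonneg (hB0 t s) (hx s)
    simp only [hTdef]; linarith
  have hT_single : ∀ x : ↥C → ℝ, (∀ s, 0 ≤ x s) → ∀ t s, B t s * x s ≤ Tf x t := by
    intro x hx t s
    have h1 : B t s * x s ≤ ∑ u, B t u * x u :=
      Finset.single_le_sum (fun u _ => mul_nonneg (hB0 t u) (hx u)) (Finset.mem_univ s)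
    simp only [hTdef]; linarith [hx t]
  have hT_inv : ∀ x : ↥C → ℝ, (∀ s, 0 ≤ x s) → (∀ t, r * x t ≤ ∑ s, B t s * x s) →
      ∀ t, r * Tf x t ≤ ∑ s, B t s * Tf x s := by
    intro x hx hinv t
    have h1 : ∑ s, B t s * Tf x s = ∑ s, B t s * x s + ∑ s, B t s * (∑ u, B s u * x u) := by
      simp only [hTdef, mul_add, Finset.sum_add_distrib]
    have h2 : r * ∑ s, B t s * x s ≤ ∑ s, B t s * (∑ u, B s u * x u) := by
      rw [Finset.mul_sum]
      apply Finset.sum_le_sum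
      intro s _
      have := hinv s
      calc r * (B t s * x s) = B t s * (r * x s) := by ring
        _ ≤ B t s * (∑ u, B s u * x u) := mul_le_mul_of_nonneg_left (hinv s) (hB0 t s)
    have h3 := hinv t
    have h5 : r * Tf x t = r * x t + r * ∑ s, B t s * x s := by
      simp only [hTdef]; ring
    rw [h5, h1]
    linarith
  -- iterates
  set W : ℕ → (↥C → ℝ) := fun k => Tf^[k] y with hWdef
  have hW0 : ∀ k s, 0 ≤ W k s := by
    intro k
    induction k with
    | zero => simpa [hWdef] using hy0
    | succ n ih =>
        intro s
        have : W (n+1) = Tf (W n) := by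
          simp [hWdef, Function.iterate_succ_apply']
        rw [this]
        exact hT_nonneg (W n) ih s
  have hWinv : ∀ k t, r * W k t ≤ ∑ s, B t s * W k s := by
    intro k
    induction k with
    | zero => simpa [hWdef] using hkey
    | succ n ih =>
        have hsucc : W (n+1) = Tf (W n) := by
          simp [hWdef, Function.iterate_succ_apply']
        rw [hsucc]
        exact hT_inv (W n) (hW0 n) ih
  have hWmono : ∀ k l, k ≤ l → ∀ t, W k t ≤ W l t := by
    intro k l hkl
    induction l with
    | zero =>
        intro t
        have : k = 0 := Nat.le_zero.mp hkl
        simp [this]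
    | succ n ih =>
        intro t
        rcases Nat.lt_or_ge k (n+1) with hlt | hge
        · have h1 := ih (Nat.lt_succ_iff.mp hlt) t
          have hsucc : W (n+1) = Tf (W n) := by
            simp [hWdef, Function.iterate_succ_apply']
          rw [hsucc]
          exact le_trans h1 (hT_ge (W n) (hW0 n) t)
        · have : k = n + 1 := le_antisymm hkl hge
          simp [this]
  -- positivity spreading along paths
  have hspread : ∀ a b : S, Relation.ReflTransGen (fun p q : S => A p q ≠ 0) a b →
      ∀ (ha : a ∈ C) (hb : b ∈ C) (k : ℕ), 0 < W k ⟨a, ha⟩ → ∃ K, 0 < W K ⟨b, hb⟩ := by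
    intro a b hab
    induction hab with
    | refl => intro ha hb k hk; exact ⟨k, by convert hk⟩
    | @tail b' c hab' hbc ih =>
        intro ha hc k hk
        have hb' : b' ∈ C := Relation.ReflTransGen.trans ha hab'
        obtain ⟨K, hK⟩ := ih ha hb' k hk
        by_cases hbc' : b' = c
        · subst hbc'
          exact ⟨K, hK⟩
        · refine ⟨K + 1, ?_⟩
          have hsucc : W (K+1) = Tf (W K) := by
            simp [hWdef, Function.iterate_succ_apply']
          rw [hsucc]
          have hne : (⟨b', hb'⟩ : ↥C) ≠ (⟨c, hc⟩ : ↥C) := by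
            intro hcon
            exact hbc' (congrArg Subtype.val hcon)
          have hBpos : 0 < B ⟨c, hc⟩ ⟨b', hb'⟩ := by
            simp only [hBdef, if_neg hne]
            have hle := hoff b' c hbc'
            have : A b' c < 0 := lt_of_le_of_ne hle hbc
            linarith
          have := hT_single (W K) (hW0 K) ⟨c, hc⟩ ⟨b', hb'⟩
          nlinarith [hW0 K (⟨b', hb'⟩ : ↥C)]
  -- every point of the component eventually becomes positive
  have hpos : ∀ t : ↥C, ∃ K, 0 < W K t := by
    intro t
    have hreach : Relation.ReflTransGen (fun p q : S => A p q ≠ 0) (s₀ : S) (t : S) := by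
      have h1 : Relation.ReflTransGen (fun p q : S => A p q ≠ 0) t₀ (s₀ : S) := s₀.2
      have h2 : Relation.ReflTransGen (fun p q : S => A p q ≠ 0) t₀ (t : S) := t.2
      exact Relation.ReflTransGen.trans
        ((@Relation.ReflTransGen.stdSymm _ _ ⟨fun a b h => hstep_symm h⟩).symm _ _ h1) h2
    have := hspread (s₀ : S) (t : S) hreach s₀.2 t.2 0 (by simpa [hWdef] using hys₀)
    obtain ⟨K, hK⟩ := this
    exact ⟨K, by convert hK⟩
  choose kf hkf using hpos
  set K₀ : ℕ := Finset.univ.sup kf with hK₀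
  set w' : ↥C → ℝ := W K₀ with hw'def
  have hw'pos : ∀ t, 0 < w' t := by
    intro t
    have h1 : kf t ≤ K₀ := Finset.le_sup (Finset.mem_univ t)
    exact lt_of_lt_of_le (hkf t) (hWmono (kf t) K₀ h1 t)
  have hw'inv : ∀ t, r * w' t ≤ ∑ s, B t s * w' s := hWinv K₀
  -- per-component negativity
  have hw'neg : ∀ t : ↥C, ∑ s : ↥C, w' s * A s t < 0 := by
    intro t
    have e1 : ∑ s : ↥C, w' s * A s t = 2 * w' t - ∑ s, B t s * w' s := by
      rw [← Finset.add_sum_erase Finset.univ (fun s : ↥C => w' s * A s t) (Finset.mem_univ t),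
        hdiag]
      have : ∑ s, B t s * w' s = ∑ s ∈ Finset.univ.erase t, B t s * w' s := by
        rw [← Finset.add_sum_erase Finset.univ (fun s : ↥C => B t s * w' s) (Finset.mem_univ t)]
        simp [hBdef]
      rw [this]
      have : ∑ s ∈ Finset.univ.erase t, B t s * w' s
          = -∑ s ∈ Finset.univ.erase t, w' s * A s t := by
        rw [← Finset.sum_neg_distrib]
        apply Finset.sum_congr rfl
        intro s hs
        have hst : s ≠ t := Finset.ne_of_mem_erase hs
        simp only [hBdef, if_neg hst]
        ring
      rw [this]
      ring
    rw [e1]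
    have := hw'inv t
    have hwt := hw'pos t
    nlinarith
  -- extend to S
  refine ⟨fun s => if hs : s ∈ C then w' ⟨s, hs⟩ else 0, ?_, ?_, ?_, ?_⟩
  · intro s
    by_cases hs : s ∈ C
    · simp only [dif_pos hs]
      exact le_of_lt (hw'pos _)
    · simp [dif_neg hs]
  · intro s hs
    simp only [dif_pos hs]
    exact hw'pos _
  · intro t ht
    have e1 : ∑ s, (if hs : s ∈ C then w' ⟨s, hs⟩ else 0) * A s t
        = ∑ s ∈ C.toFinset, (if hs : s ∈ C then w' ⟨s, hs⟩ else 0) * A s t :=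
      (Finset.sum_subset (Finset.subset_univ _) (by
        intro s _ hs
        rw [Set.mem_toFinset] at hs
        simp [dif_neg hs])).symm
    have e2 : ∑ s ∈ C.toFinset, (if hs : s ∈ C then w' ⟨s, hs⟩ else 0) * A s t
        = ∑ s : ↥C, w' s * A s (⟨t, ht⟩ : ↥C) := by
      rw [Finset.sum_subtype C.toFinset (fun s => Set.mem_toFinset)]
      apply Finset.sum_congr rfl
      intro s _
      simp [dif_pos s.2]
    rw [e1, e2]
    exact hw'neg ⟨t, ht⟩
  · intro t ht
    apply Finset.sum_eq_zero
    intro s _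
    by_cases hs : s ∈ C
    · rw [hAzero s hs t ht, mul_zero]
    · simp [dif_neg hs]

/-- Global combination: a positive vector whose pairing with every column is negative. -/
private lemma key_vec {S : Type*} [Fintype S] (A : S → S → ℝ)
    (hdiag : ∀ s, A s s = 2) (hoff : ∀ s t, s ≠ t → A s t ≤ 0)
    (hzsym : ∀ s t, A s t = 0 → A t s = 0) (hneg : NegativeType A) :
    ∃ μ : S → ℝ, (∀ s, 0 < μ s) ∧ ∀ t, ∑ s, μ s * A s t < 0 := by
  choose w h0 hp hlt hz2 using fun t₀ => comp_key A hdiag hoff hzsym t₀ (hneg t₀)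
  refine ⟨fun s => ∑ u, w u s, ?_, ?_⟩
  · intro s
    apply Finset.sum_pos' (fun u _ => h0 u s)
    exact ⟨s, Finset.mem_univ s, hp s s Relation.ReflTransGen.refl⟩
  · intro t
    have e1 : ∑ s, (∑ u, w u s) * A s t = ∑ u, ∑ s, w u s * A s t := by
      simp_rw [Finset.sum_mul]
      exact Finset.sum_comm
    rw [e1]
    have : ∑ u, ∑ s, w u s * A s t < ∑ u : S, (0 : ℝ) := by
      apply Finset.sum_lt_sum
      · intro u _
        by_cases hu : t ∈ comp A u
        · exact le_of_lt (hlt u t hu)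
        · exact le_of_eq (hz2 u t hu)
      · exact ⟨t, Finset.mem_univ t, hlt t t Relation.ReflTransGen.refl⟩
    simpa using this

end Aux

/-- **Affine chart containing `P` and its polars.** Let `P` be a Coxeter polytope of
`S^d` whose Cartan matrix is of negative type. Then there is an affine chart
(given by a linear form `f`, the chart being `{f < 0}`) of `S^d` containing `P` and all
the polars `[v_s]`, `s ∈ S`. -/
theorem negative_type_affine_chart (d : ℕ) (S : Type*) [Fintype S]
    (P : CoxPoly (EuclideanSpace ℝ (Fin (d + 1))) S)
    (hneg : NegativeType P.cartan) :
    ∃ f : EuclideanSpace ℝ (Fin (d + 1)) →ₗ[ℝ] ℝ,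
      (∀ x ∈ P.cone, x ≠ 0 → f x < 0) ∧ ∀ s : S, f (P.v s) < 0 := by
  have hoff : ∀ s t : S, s ≠ t → P.cartan s t ≤ 0 := fun s t h => P.offdiag s t h
  have hdiag : ∀ s : S, P.cartan s s = 2 := fun s => P.pair s
  have hzsym : ∀ s t : S, P.cartan s t = 0 → P.cartan t s = 0 := fun s t h => P.zsym s t h
  obtain ⟨μ, hμpos, hμ⟩ := key_vec P.cartan hdiag hoff hzsym hneg
  refine ⟨∑ s, μ s • P.α s, ?_, ?_⟩
  · intro x hx hx0
    have hfx : (∑ s, μ s • P.α s) x = ∑ s, μ s * P.α s x := by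
      simp [LinearMap.sum_apply, LinearMap.smul_apply, smul_eq_mul]
    rw [hfx]
    have hxs : ∀ s, P.α s x ≤ 0 := hx
    have hle : ∀ s ∈ Finset.univ, μ s * P.α s x ≤ 0 := fun s _ =>
      mul_nonpos_of_nonneg_of_nonpos (le_of_lt (hμpos s)) (hxs s)
    have hsum : ∑ s, μ s * P.α s x ≤ 0 := Finset.sum_nonpos hle
    rcases lt_or_eq_of_le hsum with h | h
    · exact h
    · exfalso
      have hall := (Finset.sum_eq_zero_iff_of_nonpos hle).mp h
      have hzero : ∀ s, P.α s x = 0 := by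
        intro s
        have := hall s (Finset.mem_univ s)
        have hμs := hμpos s
        by_contra hc
        exact hc (by
          rcases mul_eq_zero.mp this with h1 | h1
          · exact absurd h1 (ne_of_gt hμs)
          · exact h1)
      exact hx0 (P.sharp x (fun s => le_of_eq (hzero s))
        (fun s => by rw [map_neg, hzero s]; simp))
  · intro t
    have hfv : (∑ s, μ s • P.α s) (P.v t) = ∑ s, μ s * P.cartan s t := by
      simp [LinearMap.sum_apply, LinearMap.smul_apply, smul_eq_mul, CoxPoly.cartan]
    rw [hfv]
    exact hμ t

end Vinberg
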